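/- Let f be strictly concave on [0,1] with f(0)=0, and let σ = Σ_j p_j σ_j be a convex combination of density operators with at least two distinct σ_j having p_j > 0 (σ not equal to all σ_j). Then Tr f(σ) > Σ_j p_j Tr f(σ_j). -/

import Mathlib

open Set Matrix
open scoped ComplexOrder

/-- `Tr f(σ)` via functional calculus: the sum of `f` over the eigenvalues of a
Hermitian matrix `σ` (and `0` if `σ` is not Hermitian). -/
noncomputable def trF {n : ℕ} (f : ℝ → ℝ) (σ : Matrix (Fin n) (Fin n) ℂ) : ℝ :=
  if h : σ.IsHermitian then ∑ i, f (h.eigenvalues i) else 0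

/-- A density matrix: positive semidefinite with unit trace. -/
def IsDensityMatrix {n : ℕ} (σ : Matrix (Fin n) (Fin n) ℂ) : Prop :=
  σ.PosSemidef ∧ σ.trace = 1


noncomputable section
variable {n : ℕ}

lemma toEuclideanLin_eq_mulVec (A : Matrix (Fin n) (Fin n) ℂ) (x : (EuclideanSpace ℂ (Fin n))) :
    Matrix.toEuclideanLin A x = (WithLp.toLp 2 (A *ᵥ x) : (EuclideanSpace ℂ (Fin n))) := rfl

lemma toEuclideanLin_eigen (A : Matrix (Fin n) (Fin n) ℂ) (hA : A.IsHermitian) (k : Fin n) :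
    Matrix.toEuclideanLin A (hA.eigenvectorBasis k)
      = (hA.eigenvalues k : ℂ) • hA.eigenvectorBasis k := by
  rw [toEuclideanLin_eq_mulVec]
  show (WithLp.toLp 2 (A *ᵥ hA.eigenvectorBasis k) : (EuclideanSpace ℂ (Fin n))) = _
  have h : (WithLp.toLp 2 (A *ᵥ hA.eigenvectorBasis k) : (EuclideanSpace ℂ (Fin n))) = hA.eigenvalues k • hA.eigenvectorBasis k := by
    rw [hA.mulVec_eigenvectorBasis k]; rfl
  rw [h, RCLike.real_smul_eq_coe_smul (K := ℂ)]; rfl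

lemma toEuclideanLin_expand (A : Matrix (Fin n) (Fin n) ℂ) (hA : A.IsHermitian) (x : (EuclideanSpace ℂ (Fin n))) :
    Matrix.toEuclideanLin A x
      = ∑ k, ((inner ℂ (hA.eigenvectorBasis k) x : ℂ) * (hA.eigenvalues k : ℂ))
          • hA.eigenvectorBasis k := by
  conv_lhs => rw [← hA.eigenvectorBasis.sum_repr' x]
  rw [map_sum]
  exact Finset.sum_congr rfl fun k _ => by
    rw [_root_.map_smul, toEuclideanLin_eigen A hA k, smul_smul]

def qf (A : Matrix (Fin n) (Fin n) ℂ) (x : (EuclideanSpace ℂ (Fin n))) : ℝ :=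
  RCLike.re (inner (𝕜 := ℂ) x (WithLp.toLp 2 (A *ᵥ x) : (EuclideanSpace ℂ (Fin n))))

lemma qf_expand (A : Matrix (Fin n) (Fin n) ℂ) (hA : A.IsHermitian) (x : (EuclideanSpace ℂ (Fin n))) :
    qf A x = ∑ k, ‖(inner ℂ (hA.eigenvectorBasis k) x : ℂ)‖^2 * hA.eigenvalues k := by
  have hc : (inner (𝕜 := ℂ) x (WithLp.toLp 2 (A *ᵥ x) : (EuclideanSpace ℂ (Fin n))))
      = ∑ k, (‖(inner ℂ (hA.eigenvectorBasis k) x : ℂ)‖^2 * hA.eigenvalues k : ℝ) := by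
    rw [show (WithLp.toLp 2 (A *ᵥ x) : (EuclideanSpace ℂ (Fin n))) = Matrix.toEuclideanLin A x from rfl, toEuclideanLin_expand A hA,
      inner_sum]
    rw [Complex.ofReal_sum]
    refine Finset.sum_congr rfl fun k _ => ?_
    rw [inner_smul_right, ← inner_conj_symm x (hA.eigenvectorBasis k)]
    push_cast
    rw [show ∀ z w : ℂ, z * w * (starRingEnd ℂ) z = (z * (starRingEnd ℂ) z) * w from
      fun z w => by ring, Complex.mul_conj']
  unfold qf
  rw [hc]
  norm_cast

lemma sum_sq_inner (b : OrthonormalBasis (Fin n) ℂ (EuclideanSpace ℂ (Fin n))) (y : (EuclideanSpace ℂ (Fin n))) (hy : ‖y‖ = 1) :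
    ∑ i, ‖(inner (𝕜 := ℂ) y (b i) : ℂ)‖^2 = 1 := by
  have h := b.sum_inner_mul_inner y y
  have hyy : (inner (𝕜 := ℂ) y y : ℂ) = 1 := by
    rw [inner_self_eq_norm_sq_to_K, hy]; norm_num
  rw [hyy] at h
  have : ∀ i, (inner (𝕜 := ℂ) y (b i) : ℂ) * inner ℂ (b i) y
      = (‖(inner (𝕜 := ℂ) y (b i) : ℂ)‖^2 : ℝ) := by
    intro i
    rw [← inner_conj_symm y (b i), mul_comm, Complex.mul_conj',
      ← RCLike.norm_conj (K := ℂ) (inner ℂ (b i) y), inner_conj_symm]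
    push_cast
    ring
  rw [Finset.sum_congr rfl fun i _ => this i] at h
  exact_mod_cast congrArg Complex.re h

lemma qf_eigen (A : Matrix (Fin n) (Fin n) ℂ) (hA : A.IsHermitian) (i : Fin n) :
    qf A (hA.eigenvectorBasis i) = hA.eigenvalues i := by
  unfold qf
  have h : (WithLp.toLp 2 (A *ᵥ hA.eigenvectorBasis i) : EuclideanSpace ℂ (Fin n))
      = hA.eigenvalues i • hA.eigenvectorBasis i := by rw [hA.mulVec_eigenvectorBasis i]; rfl
  have h1 : ‖hA.eigenvectorBasis i‖ = 1 := hA.eigenvectorBasis.orthonormal.1 i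
  have h2 : (inner ℂ (hA.eigenvectorBasis i) (hA.eigenvectorBasis i) : ℂ) = 1 := by
    rw [inner_self_eq_norm_sq_to_K, h1]; norm_num
  rw [h, RCLike.real_smul_eq_coe_smul (K := ℂ), inner_smul_right, h2, mul_one]
  simp

lemma qf_sum {m : ℕ} (p : Fin m → ℝ) (σ : Fin m → Matrix (Fin n) (Fin n) ℂ)
    (x : EuclideanSpace ℂ (Fin n)) :
    qf (∑ j, (p j : ℂ) • σ j) x = ∑ j, p j * qf (σ j) x := by
  unfold qf
  have h : (WithLp.toLp 2 ((∑ j, (p j : ℂ) • σ j) *ᵥ x) : EuclideanSpace ℂ (Fin n))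
      = ∑ j, (p j : ℂ) • (WithLp.toLp 2 (σ j *ᵥ x : Fin n → ℂ) : EuclideanSpace ℂ (Fin n)) := by
    simp only [← WithLp.toLp_smul, ← WithLp.toLp_sum]
    congr 1
    funext i
    simp only [Matrix.mulVec, dotProduct, Matrix.sum_apply, Pi.smul_apply,
      Matrix.smul_apply, Finset.sum_apply, smul_eq_mul, Finset.sum_mul, Finset.mul_sum]
    rw [Finset.sum_comm]
    exact Finset.sum_congr rfl fun j _ => Finset.sum_congr rfl fun k _ => by ring
  rw [h, inner_sum, map_sum]
  refine Finset.sum_congr rfl fun j _ => ?_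
  rw [inner_smul_right]
  simp [RCLike.mul_re]

section Peierls
variable (A : Matrix (Fin n) (Fin n) ℂ) (hA : A.IsHermitian)
  (v : OrthonormalBasis (Fin n) ℂ (EuclideanSpace ℂ (Fin n)))

lemma sum_B_k (i : Fin n) :
    ∑ k, ‖(inner (𝕜 := ℂ) (hA.eigenvectorBasis k) (v i) : ℂ)‖^2 = 1 := by
  calc ∑ k, ‖(inner (𝕜 := ℂ) (hA.eigenvectorBasis k) (v i) : ℂ)‖^2
      = ∑ k, ‖(inner (𝕜 := ℂ) (v i) (hA.eigenvectorBasis k) : ℂ)‖^2 :=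
        Finset.sum_congr rfl fun k _ => by rw [norm_inner_symm]
    _ = 1 := sum_sq_inner hA.eigenvectorBasis (v i) (v.orthonormal.1 i)

lemma sum_B_i (k : Fin n) :
    ∑ i, ‖(inner (𝕜 := ℂ) (hA.eigenvectorBasis k) (v i) : ℂ)‖^2 = 1 :=
  sum_sq_inner v (hA.eigenvectorBasis k) (hA.eigenvectorBasis.orthonormal.1 k)

lemma qf_mem (hm : ∀ k, hA.eigenvalues k ∈ Set.Icc (0:ℝ) 1) (i : Fin n) :
    qf A (v i) ∈ Set.Icc (0:ℝ) 1 := by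
  rw [qf_expand A hA]
  constructor
  · exact Finset.sum_nonneg fun k _ => mul_nonneg (sq_nonneg _) (hm k).1
  · calc ∑ k, ‖(inner (𝕜 := ℂ) (hA.eigenvectorBasis k) (v i) : ℂ)‖^2 * hA.eigenvalues k
        ≤ ∑ k, ‖(inner (𝕜 := ℂ) (hA.eigenvectorBasis k) (v i) : ℂ)‖^2 * 1 :=
          Finset.sum_le_sum fun k _ => mul_le_mul_of_nonneg_left (hm k).2 (sq_nonneg _)
    _ = 1 := by simpa using sum_B_k A hA v i

lemma peierls_le (f : ℝ → ℝ) (hf : ConcaveOn ℝ (Set.Icc 0 1) f)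
    (hm : ∀ k, hA.eigenvalues k ∈ Set.Icc (0:ℝ) 1) :
    ∑ k, f (hA.eigenvalues k) ≤ ∑ i, f (qf A (v i)) := by
  have key : ∀ i, ∑ k, ‖(inner (𝕜 := ℂ) (hA.eigenvectorBasis k) (v i) : ℂ)‖^2
      * f (hA.eigenvalues k) ≤ f (qf A (v i)) := by
    intro i
    rw [qf_expand A hA]
    have := hf.le_map_sum (t := Finset.univ)
      (w := fun k => ‖(inner (𝕜 := ℂ) (hA.eigenvectorBasis k) (v i) : ℂ)‖^2)
      (p := hA.eigenvalues)
      (fun k _ => sq_nonneg _) (sum_B_k A hA v i) (fun k _ => hm k)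
    simpa [smul_eq_mul] using this
  calc ∑ k, f (hA.eigenvalues k)
      = ∑ k, (∑ i, ‖(inner (𝕜 := ℂ) (hA.eigenvectorBasis k) (v i) : ℂ)‖^2)
          * f (hA.eigenvalues k) :=
        (Finset.sum_congr rfl fun k _ => by rw [sum_B_i A hA v k, one_mul]).symm
    _ = ∑ i, ∑ k, ‖(inner (𝕜 := ℂ) (hA.eigenvectorBasis k) (v i) : ℂ)‖^2
          * f (hA.eigenvalues k) := by
        rw [Finset.sum_comm]
        exact Finset.sum_congr rfl fun k _ => by rw [Finset.sum_mul]
    _ ≤ ∑ i, f (qf A (v i)) := Finset.sum_le_sum fun i _ => key i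

end Peierls

section Peierls2
variable (A : Matrix (Fin n) (Fin n) ℂ) (hA : A.IsHermitian)
  (v : OrthonormalBasis (Fin n) ℂ (EuclideanSpace ℂ (Fin n)))

lemma peierls_term (f : ℝ → ℝ) (hf : ConcaveOn ℝ (Set.Icc 0 1) f)
    (hm : ∀ k, hA.eigenvalues k ∈ Set.Icc (0:ℝ) 1) (i : Fin n) :
    ∑ k, ‖(inner (𝕜 := ℂ) (hA.eigenvectorBasis k) (v i) : ℂ)‖^2
      * f (hA.eigenvalues k) ≤ f (qf A (v i)) := by
  rw [qf_expand A hA]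
  have := hf.le_map_sum (t := Finset.univ)
    (w := fun k => ‖(inner (𝕜 := ℂ) (hA.eigenvectorBasis k) (v i) : ℂ)‖^2)
    (p := hA.eigenvalues)
    (fun k _ => sq_nonneg _) (sum_B_k A hA v i) (fun k _ => hm k)
  simpa [smul_eq_mul] using this

lemma peierls_term_strict (f : ℝ → ℝ) (hf : StrictConcaveOn ℝ (Set.Icc 0 1) f)
    (hm : ∀ k, hA.eigenvalues k ∈ Set.Icc (0:ℝ) 1) (i₀ : Fin n)
    (hne : Matrix.toEuclideanLin A (v i₀) ≠ ((qf A (v i₀) : ℂ)) • v i₀) :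
    ∑ k, ‖(inner (𝕜 := ℂ) (hA.eigenvectorBasis k) (v i₀) : ℂ)‖^2
      * f (hA.eigenvalues k) < f (qf A (v i₀)) := by
  classical
  set c : Fin n → ℂ := fun k => inner ℂ (hA.eigenvectorBasis k) (v i₀) with hc
  set B : Fin n → ℝ := fun k => ‖c k‖^2 with hB
  set t : Finset (Fin n) := Finset.univ.filter (fun k => B k ≠ 0) with ht
  have hBt0 : ∀ k ∈ Finset.univ, k ∉ t → B k = 0 := by
    intro k _ hk
    by_contra h
    exact hk (Finset.mem_filter.mpr ⟨Finset.mem_univ k, h⟩)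
  have hsumt : ∀ (g : Fin n → ℝ), ∑ k ∈ t, B k * g k = ∑ k, B k * g k := by
    intro g
    refine Finset.sum_subset (Finset.subset_univ t) ?_
    intro k hk hkt
    rw [hBt0 k hk hkt, zero_mul]
  have hsum1 : ∑ k ∈ t, B k = 1 := by
    have := hsumt (fun _ => 1)
    simp only [mul_one] at this; rw [this]; exact sum_B_k A hA v i₀
  have hqf : qf A (v i₀) = ∑ k, B k * hA.eigenvalues k := qf_expand A hA (v i₀)
  -- nonconstancy of eigenvalues on the support
  have hp : ∃ k ∈ t, ∃ k' ∈ t, hA.eigenvalues k ≠ hA.eigenvalues k' := by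
    by_contra H
    push_neg at H
    -- all eigenvalues equal on the support: derive the eigen equation
    apply hne
    have hq : ∀ k, c k ≠ 0 → hA.eigenvalues k = qf A (v i₀) := by
      intro k hck
      have hkt : k ∈ t := Finset.mem_filter.mpr ⟨Finset.mem_univ k, by
        simp [hB, pow_eq_zero_iff, norm_eq_zero, hck]⟩
      have : qf A (v i₀) = ∑ k' ∈ t, B k' * hA.eigenvalues k' := by rw [hqf, hsumt]
      rw [this, Finset.sum_congr rfl fun k' hk' => by rw [H k' hk' k hkt],
        ← Finset.sum_mul, hsum1, one_mul]
    rw [toEuclideanLin_expand A hA]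
    have : ∀ k, (c k * (hA.eigenvalues k : ℂ)) • hA.eigenvectorBasis k
        = (qf A (v i₀) : ℂ) • (c k • hA.eigenvectorBasis k) := by
      intro k
      by_cases hck : c k = 0
      · simp [hck]
      · rw [hq k hck, smul_smul, mul_comm]
    rw [Finset.sum_congr rfl fun k _ => this k, ← Finset.smul_sum,
      hA.eigenvectorBasis.sum_repr' (v i₀)]
  -- strict Jensen over the support
  have hlt := hf.lt_map_sum (t := t) (w := B) (p := hA.eigenvalues)
    (fun k hk => lt_of_le_of_ne (sq_nonneg _) (Ne.symm (Finset.mem_filter.mp hk).2))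
    hsum1 (fun k _ => hm k) hp
  simp only [smul_eq_mul] at hlt
  rw [hsumt, hsumt] at hlt
  rwa [hqf]

lemma peierls_lt (f : ℝ → ℝ) (hf : StrictConcaveOn ℝ (Set.Icc 0 1) f)
    (hm : ∀ k, hA.eigenvalues k ∈ Set.Icc (0:ℝ) 1) (i₀ : Fin n)
    (hne : Matrix.toEuclideanLin A (v i₀) ≠ ((qf A (v i₀) : ℂ)) • v i₀) :
    ∑ k, f (hA.eigenvalues k) < ∑ i, f (qf A (v i)) := by
  calc ∑ k, f (hA.eigenvalues k)
      = ∑ k, (∑ i, ‖(inner (𝕜 := ℂ) (hA.eigenvectorBasis k) (v i) : ℂ)‖^2)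
          * f (hA.eigenvalues k) :=
        (Finset.sum_congr rfl fun k _ => by rw [sum_B_i A hA v k, one_mul]).symm
    _ = ∑ i, ∑ k, ‖(inner (𝕜 := ℂ) (hA.eigenvectorBasis k) (v i) : ℂ)‖^2
          * f (hA.eigenvalues k) := by
        rw [Finset.sum_comm]
        exact Finset.sum_congr rfl fun k _ => by rw [Finset.sum_mul]
    _ < ∑ i, f (qf A (v i)) :=
        Finset.sum_lt_sum (fun i _ => peierls_term A hA v f hf.concaveOn hm i)
          ⟨i₀, Finset.mem_univ i₀, peierls_term_strict A hA v f hf hm i₀ hne⟩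

end Peierls2

lemma sum_eigenvalues_eq_re_trace (A : Matrix (Fin n) (Fin n) ℂ) (hA : A.IsHermitian) :
    (∑ k, (hA.eigenvalues k : ℂ)) = A.trace := by
  exact hA.trace_eq_sum_eigenvalues.symm

lemma eigenvalues_mem_Icc (A : Matrix (Fin n) (Fin n) ℂ) (hA : A.PosSemidef)
    (htr : A.trace = 1) (k : Fin n) : hA.1.eigenvalues k ∈ Set.Icc (0:ℝ) 1 := by
  have hsum : ∑ k', hA.1.eigenvalues k' = 1 := by
    have := sum_eigenvalues_eq_re_trace A hA.1
    rw [htr] at this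
    exact_mod_cast this
  refine ⟨hA.eigenvalues_nonneg k, ?_⟩
  rw [← hsum]
  exact Finset.single_le_sum (fun k' _ => hA.eigenvalues_nonneg k') (Finset.mem_univ k)

end


theorem trF_strictly_concave_on_density_matrices
    {n m : ℕ} (f : ℝ → ℝ) (hf : StrictConcaveOn ℝ (Icc (0:ℝ) 1) f) (hf0 : f 0 = 0)
    (p : Fin m → ℝ) (hp : ∀ j, 0 < p j) (hp1 : ∑ j, p j = 1)
    (σ : Fin m → Matrix (Fin n) (Fin n) ℂ) (hσ : ∀ j, IsDensityMatrix (σ j))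
    (hdist : ∃ j k, σ j ≠ σ k) :
    ∑ j, p j * trF f (σ j) < trF f (∑ j, (p j : ℂ) • σ j) := by
  classical
  have hherm : ∀ j, (σ j).IsHermitian := fun j => (hσ j).1.1
  have hS : (∑ j, (p j : ℂ) • σ j).IsHermitian := by
    show Matrix.conjTranspose _ = _
    rw [Matrix.conjTranspose_sum]
    exact Finset.sum_congr rfl fun j _ => by
      rw [Matrix.conjTranspose_smul, hherm j]
      congr 1
      simp [Complex.star_def, Complex.conj_ofReal]
  set v := hS.eigenvectorBasis with hv
  set q : Fin m → Fin n → ℝ := fun j i => qf (σ j) (v i) with hq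
  have hmj : ∀ j k, (hherm j).eigenvalues k ∈ Set.Icc (0:ℝ) 1 := fun j k =>
    eigenvalues_mem_Icc (σ j) (hσ j).1 (hσ j).2 k
  have hqmem : ∀ j i, q j i ∈ Set.Icc (0:ℝ) 1 := fun j i =>
    qf_mem (σ j) (hherm j) v (hmj j) i
  have hlam : ∀ i, hS.eigenvalues i = ∑ j, p j * q j i := by
    intro i
    rw [← qf_eigen _ hS i, qf_sum]
  have htrS : trF f (∑ j, (p j : ℂ) • σ j) = ∑ i, f (hS.eigenvalues i) := dif_pos hS
  have htrj : ∀ j, trF f (σ j) = ∑ k, f ((hherm j).eigenvalues k) := fun j =>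
    dif_pos (hherm j)
  have jensen : ∀ i, ∑ j, p j * f (q j i) ≤ f (hS.eigenvalues i) := by
    intro i
    rw [hlam i]
    have := hf.concaveOn.le_map_sum (t := Finset.univ) (w := p) (p := fun j => q j i)
      (fun j _ => (hp j).le) hp1 (fun j _ => hqmem j i)
    simpa [smul_eq_mul] using this
  have peierls : ∀ j, trF f (σ j) ≤ ∑ i, f (q j i) := fun j => by
    rw [htrj j]
    exact peierls_le (σ j) (hherm j) v f hf.concaveOn (hmj j)
  rw [htrS]
  by_cases hcase : ∃ i, ∃ j j', q j i ≠ q j' i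
  · obtain ⟨i₀, j₁, j₂, hne⟩ := hcase
    calc ∑ j, p j * trF f (σ j) ≤ ∑ j, p j * ∑ i, f (q j i) :=
        Finset.sum_le_sum fun j _ => mul_le_mul_of_nonneg_left (peierls j) (hp j).le
      _ = ∑ i, ∑ j, p j * f (q j i) := by
          simp_rw [Finset.mul_sum]; exact Finset.sum_comm
      _ < ∑ i, f (hS.eigenvalues i) := by
          refine Finset.sum_lt_sum (fun i _ => jensen i) ⟨i₀, Finset.mem_univ _, ?_⟩
          rw [hlam i₀]
          have := hf.lt_map_sum (t := Finset.univ) (w := p) (p := fun j => q j i₀)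
            (fun j _ => hp j) hp1 (fun j _ => hqmem j i₀)
            ⟨j₁, Finset.mem_univ _, j₂, Finset.mem_univ _, hne⟩
          simpa [smul_eq_mul] using this
  · push_neg at hcase
    by_cases hcase2 : ∃ j i, Matrix.toEuclideanLin (σ j) (v i) ≠ ((q j i : ℂ)) • v i
    · obtain ⟨j₀, i₀, hne⟩ := hcase2
      have hstrict : trF f (σ j₀) < ∑ i, f (q j₀ i) := by
        rw [htrj j₀]
        exact peierls_lt (σ j₀) (hherm j₀) v f hf (hmj j₀) i₀ hne
      calc ∑ j, p j * trF f (σ j) < ∑ j, p j * ∑ i, f (q j i) :=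
          Finset.sum_lt_sum (fun j _ => mul_le_mul_of_nonneg_left (peierls j) (hp j).le)
            ⟨j₀, Finset.mem_univ _, mul_lt_mul_of_pos_left hstrict (hp j₀)⟩
        _ = ∑ i, ∑ j, p j * f (q j i) := by
            simp_rw [Finset.mul_sum]; exact Finset.sum_comm
        _ ≤ ∑ i, f (hS.eigenvalues i) := Finset.sum_le_sum fun i _ => jensen i
    · exfalso
      push_neg at hcase2
      obtain ⟨j, k, hjk⟩ := hdist
      apply hjk
      have heq : Matrix.toEuclideanLin (σ j) = Matrix.toEuclideanLin (σ k) := by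
        refine v.toBasis.ext fun i => ?_
        rw [OrthonormalBasis.coe_toBasis]
        rw [hcase2 j i, hcase2 k i, hcase i j k]
      exact Matrix.toEuclideanLin.injective heq
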